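/- arXiv:2001.06671 — 2 statements merged into one kernel-verified Lean document; each statement's English description precedes it below -/
import Mathlib

section
/- In the generalized quaternion group H_{2^n} with n ≥ 3, the central element -1 = x^{2^{n-2}} has exactly 2^{n-1} + 2 square roots, while the identity element has exactly 2 square roots. -/
open QuaternionGroup

private lemma count_two (N t : ℕ) [NeZero N] (ht : t < 2 * N) (hev : t % 2 = 0) :
    Nat.card {i : ZMod (2 * N) // i + i = (t : ZMod (2 * N))} = 2 := by
  have hN : 0 < N := Nat.pos_of_ne_zero (NeZero.ne N)
  haveI : NeZero (2 * N) := ⟨by omega⟩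
  have key : ∀ i : ZMod (2 * N), i + i = (t : ZMod (2 * N)) ↔
      (i = ((t / 2 : ℕ) : ZMod (2 * N)) ∨ i = ((t / 2 + N : ℕ) : ZMod (2 * N))) := by
    intro i
    have hvlt : i.val < 2 * N := ZMod.val_lt i
    have hcast : ((i.val : ℕ) : ZMod (2 * N)) = i := ZMod.natCast_rightInverse i
    set v := i.val with hv
    rw [← hcast]
    have h1 : ((v : ZMod (2 * N)) + v = (t : ZMod (2 * N))) ↔ (v + v) % (2 * N) = t % (2 * N) := by
      rw [← Nat.cast_add, ZMod.natCast_eq_natCast_iff']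
    have h2 : ((v : ZMod (2 * N)) = ((t / 2 : ℕ) : ZMod (2 * N))) ↔ v % (2 * N) = (t / 2) % (2 * N) :=
      ZMod.natCast_eq_natCast_iff' _ _ _
    have h3 : ((v : ZMod (2 * N)) = ((t / 2 + N : ℕ) : ZMod (2 * N))) ↔
        v % (2 * N) = (t / 2 + N) % (2 * N) := ZMod.natCast_eq_natCast_iff' _ _ _
    rw [h1, h2, h3, Nat.mod_eq_of_lt ht, Nat.mod_eq_of_lt hvlt,
      Nat.mod_eq_of_lt (show t / 2 < 2 * N by omega),
      Nat.mod_eq_of_lt (show t / 2 + N < 2 * N by omega)]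
    rcases Nat.lt_or_ge (v + v) (2 * N) with h | h
    · rw [Nat.mod_eq_of_lt h]; omega
    · rw [Nat.mod_eq_sub_mod h, Nat.mod_eq_of_lt (by omega)]; omega
  have hne : ((t / 2 : ℕ) : ZMod (2 * N)) ≠ ((t / 2 + N : ℕ) : ZMod (2 * N)) := by
    rw [Ne, ZMod.natCast_eq_natCast_iff', Nat.mod_eq_of_lt (by omega),
      Nat.mod_eq_of_lt (by omega)]
    omega
  have hset : {i : ZMod (2 * N) | i + i = (t : ZMod (2 * N))} =
      {((t / 2 : ℕ) : ZMod (2 * N)), ((t / 2 + N : ℕ) : ZMod (2 * N))} := by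
    ext i; simpa using key i
  have : Nat.card {i : ZMod (2 * N) // i + i = (t : ZMod (2 * N))} =
      Set.ncard {i : ZMod (2 * N) | i + i = (t : ZMod (2 * N))} :=
    (Nat.card_coe_set_eq _).symm
  rw [this, hset, Set.ncard_pair hne]

private def splitEquiv (N : ℕ) (c : QuaternionGroup N) :
    {g : QuaternionGroup N // g ^ 2 = c} ≃
      {i : ZMod (2 * N) // (a i : QuaternionGroup N) ^ 2 = c} ⊕
      {i : ZMod (2 * N) // (xa i : QuaternionGroup N) ^ 2 = c} where
  toFun g := match g with
    | ⟨a i, h⟩ => Sum.inl ⟨i, h⟩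
    | ⟨xa i, h⟩ => Sum.inr ⟨i, h⟩
  invFun := Sum.elim (fun p => ⟨a p.1, p.2⟩) (fun p => ⟨xa p.1, p.2⟩)
  left_inv := by rintro ⟨(i | i), h⟩ <;> rfl
  right_inv := by rintro (⟨i, h⟩ | ⟨i, h⟩) <;> rfl

private lemma a_sq (N : ℕ) (i : ZMod (2 * N)) : (a i : QuaternionGroup N) ^ 2 = a (i + i) := by
  rw [sq, a_mul_a]

/-- In `H_{2^n} = QuaternionGroup (2^(n-2))` with `n ≥ 3`, the central element
`-1 = x^(2^(n-2))` has exactly `2^(n-1) + 2` square roots, while the identity has exactly `2`. -/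
theorem stmt2 (n N : ℕ) (hn : 3 ≤ n) (hN : N = 2 ^ (n - 2)) [NeZero N] :
    Nat.card {g : QuaternionGroup N //
        g ^ 2 = (QuaternionGroup.a 1 : QuaternionGroup N) ^ N} = 2 ^ (n - 1) + 2 ∧
    Nat.card {g : QuaternionGroup N // g ^ 2 = 1} = 2 := by
  have hNpos : 0 < N := Nat.pos_of_ne_zero (NeZero.ne N)
  haveI : NeZero (2 * N) := ⟨by omega⟩
  have hNeven : N % 2 = 0 := by
    rw [hN]
    have : n - 2 = (n - 3) + 1 := by omega
    rw [this, pow_succ]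
    omega
  constructor
  · rw [Nat.card_congr (splitEquiv N _)]
    rw [Nat.card_sum]
    have h1 : Nat.card {i : ZMod (2 * N) // (a i : QuaternionGroup N) ^ 2 = a 1 ^ N} = 2 := by
      have : ∀ i : ZMod (2 * N),
          ((a i : QuaternionGroup N) ^ 2 = a 1 ^ N) ↔ i + i = (N : ZMod (2 * N)) := by
        intro i
        rw [a_sq, a_one_pow]
        constructor
        · intro h; exact (a.injEq _ _).mp h
        · intro h; rw [h]
      rw [Nat.card_congr (Equiv.subtypeEquivRight this)]
      exact count_two N N (by omega) hNeven
    have h2 : Nat.card {i : ZMod (2 * N) // (xa i : QuaternionGroup N) ^ 2 = a 1 ^ N} = 2 * N := by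
      have : ∀ i : ZMod (2 * N), ((xa i : QuaternionGroup N) ^ 2 = a 1 ^ N) := by
        intro i; rw [xa_sq, a_one_pow]
      rw [Nat.card_congr (Equiv.subtypeUnivEquiv this)]
      simp [Nat.card_eq_fintype_card, ZMod.card]
    rw [h1, h2]
    have : 2 ^ (n - 1) = 2 * N := by
      rw [hN, ← pow_succ']
      congr 1
      omega
    omega
  · rw [Nat.card_congr (splitEquiv N 1)]
    rw [Nat.card_sum]
    have h1 : Nat.card {i : ZMod (2 * N) // (a i : QuaternionGroup N) ^ 2 = 1} = 2 := by
      have : ∀ i : ZMod (2 * N),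
          ((a i : QuaternionGroup N) ^ 2 = 1) ↔ i + i = ((0 : ℕ) : ZMod (2 * N)) := by
        intro i
        rw [a_sq, one_def, Nat.cast_zero]
        constructor
        · intro h; exact (a.injEq _ _).mp h
        · intro h; rw [h]
      rw [Nat.card_congr (Equiv.subtypeEquivRight this)]
      exact count_two N 0 (by omega) (by omega)
    have h2 : Nat.card {i : ZMod (2 * N) // (xa i : QuaternionGroup N) ^ 2 = 1} = 0 := by
      haveI : IsEmpty {i : ZMod (2 * N) // (xa i : QuaternionGroup N) ^ 2 = 1} := by
        constructor
        rintro ⟨i, h⟩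
        rw [xa_sq, one_def] at h
        have hNz : (N : ZMod (2 * N)) = ((0 : ℕ) : ZMod (2 * N)) := by
          exact_mod_cast (a.injEq _ _).mp h
        rw [ZMod.natCast_eq_natCast_iff', Nat.mod_eq_of_lt (by omega), Nat.zero_mod] at hNz
        omega
      exact Nat.card_of_isEmpty
    rw [h1, h2]
end

section
/- Let M/L be a number field extension of the form M = L(√η) where η is a unit of the ring of integers of L. Then |d_M|^{1/[M:ℚ]} ≤ 2 |d_L|^{1/[L:ℚ]}, where d_M and d_L denote the absolute discriminants. -/
open NumberField Module Polynomial

section Aux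

variable {L M : Type*} [Field L] [Field M] [NumberField L] [NumberField M] [Algebra L M]

/-- Key estimate in the degree-two case: `|d_M| ≤ 4 ^ [L:ℚ] * d_L ^ 2`. -/
theorem stmt18_key (η : (𝓞 L)ˣ) (α : M)
    (hα : α ^ 2 = algebraMap L M (algebraMap (𝓞 L) L (η : 𝓞 L)))
    (pb : PowerBasis L M) (hgen : pb.gen = α) (hdim : pb.dim = 2) :
    |(NumberField.discr M : ℚ)| ≤
      4 ^ (Module.finrank ℚ L) * |(NumberField.discr L : ℚ)| ^ 2 := by
  classical
  set ηL : L := algebraMap (𝓞 L) L (η : 𝓞 L) with hηLdef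
  have hZ : IsIntegral L α := IsIntegral.of_finite L α
  -- the minimal polynomial of `α` over `L` is `X ^ 2 - ηL`
  have hroot : (Polynomial.aeval α) (X ^ 2 - C ηL) = 0 := by
    simp [hα]
  have hmin : minpoly L α = X ^ 2 - C ηL := by
    refine Polynomial.eq_of_dvd_of_natDegree_le_of_leadingCoeff
      (minpoly.dvd L α hroot) ?_ ?_
    · rw [natDegree_X_pow_sub_C, ← hgen, pb.natDegree_minpoly, hdim]
    · rw [(minpoly.monic hZ).leadingCoeff,
        (monic_X_pow_sub_C ηL (two_ne_zero)).leadingCoeff]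
  have h2 : finrank L M = 2 := by rw [pb.finrank, hdim]
  -- traces of powers of `α`
  have tr1 : Algebra.trace L M (1 : M) = 2 := by
    have := Algebra.trace_algebraMap (R := L) (S := M) 1
    rw [map_one] at this
    rw [this, h2]
    norm_num
  have trα : Algebra.trace L M α = 0 := by
    have := pb.trace_gen_eq_nextCoeff_minpoly
    rw [hgen, hmin] at this
    rw [this, Polynomial.nextCoeff, natDegree_X_pow_sub_C]
    simp [coeff_X_pow]
  have trα2 : Algebra.trace L M (α ^ 2) = 2 * ηL := by
    rw [hα, Algebra.trace_algebraMap, h2, nsmul_eq_mul]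
    norm_num
  -- set up the bases
  set ι := Module.Free.ChooseBasisIndex ℤ (𝓞 L) with hι
  set bL : Basis ι ℚ L := integralBasis L with hbL
  set bα : Basis (Fin 2) L M := pb.basis.reindex (finCongr hdim) with hbα
  have hbαa : ∀ j : Fin 2, bα j = α ^ (j : ℕ) := by
    intro j
    rw [hbα, Basis.reindex_apply, pb.coe_basis, hgen]
    congr 1
  set c : Basis (ι × Fin 2) ℚ M := bL.smulTower bα with hc
  set n : ℕ := finrank ℚ L with hn
  have hcardι : Fintype.card ι = n := (finrank_eq_card_basis bL).symm
  -- trace matrix of `c`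
  set T : Matrix (ι × Fin 2) (ι × Fin 2) ℚ := Algebra.traceMatrix ℚ ⇑c with hT
  set A : Matrix ι ι ℚ := Algebra.traceMatrix ℚ ⇑bL with hA
  set B : Matrix ι ι ℚ := fun i k => Algebra.trace ℚ L (ηL * (bL i * bL k)) with hB
  have hmul2 : ∀ y : L, Algebra.trace ℚ L (y * 2) = 2 * Algebra.trace ℚ L y := by
    intro y
    rw [mul_comm, show (2 : L) = algebraMap ℚ L 2 by norm_num, ← Algebra.smul_def,
      map_smul, smul_eq_mul]
  have hkey : ∀ (i k : ι) (j l : Fin 2), T (i, j) (k, l) =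
      Algebra.trace ℚ L ((bL i * bL k) * Algebra.trace L M (α ^ ((j : ℕ) + (l : ℕ)))) := by
    intro i k j l
    rw [hT, Algebra.traceMatrix_apply, Algebra.traceForm_apply, hc]
    rw [show (bL.smulTower bα) (i, j) = bL i • bα j from Basis.smulTower_apply _ _ _,
      show (bL.smulTower bα) (k, l) = bL k • bα l from Basis.smulTower_apply _ _ _,
      hbαa, hbαa, smul_mul_smul_comm, ← pow_add, ← Algebra.trace_trace (S := L),
      map_smul, smul_eq_mul]
  set e : ι ⊕ ι ≃ ι × Fin 2 :=
    { toFun := Sum.elim (fun i => (i, 0)) (fun i => (i, 1))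
      invFun := fun p => if p.2 = 0 then Sum.inl p.1 else Sum.inr p.1
      left_inv := by rintro (i | i) <;> simp
      right_inv := by
        rintro ⟨i, j⟩
        fin_cases j <;> simp } with he
  have hTsub : T.submatrix e e = Matrix.fromBlocks ((2 : ℚ) • A) 0 0 ((2 : ℚ) • B) := by
    ext x y
    rcases x with i | i <;> rcases y with k | k
    · have := hkey i k 0 0
      simp only [Matrix.submatrix_apply, he, Equiv.coe_fn_mk, Sum.elim_inl,
        Matrix.fromBlocks_apply₁₁] at this ⊢
      rw [this]
      simp only [Fin.val_zero, add_zero, pow_zero, tr1, hmul2]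
      rw [Matrix.smul_apply, hA, Algebra.traceMatrix_apply, Algebra.traceForm_apply,
        smul_eq_mul]
    · have := hkey i k 0 1
      simp only [Matrix.submatrix_apply, he, Equiv.coe_fn_mk, Sum.elim_inl, Sum.elim_inr,
        Matrix.fromBlocks_apply₁₂] at this ⊢
      rw [this]
      simp [trα]
    · have := hkey i k 1 0
      simp only [Matrix.submatrix_apply, he, Equiv.coe_fn_mk, Sum.elim_inl, Sum.elim_inr,
        Matrix.fromBlocks_apply₂₁] at this ⊢
      rw [this]
      simp [trα]
    · have h11 := hkey i k 1 1
      norm_num at h11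
      simp only [Matrix.submatrix_apply, he, Equiv.coe_fn_mk, Sum.elim_inr,
        Matrix.fromBlocks_apply₂₂]
      rw [h11, trα2, show bL i * bL k * (2 * ηL) = (ηL * (bL i * bL k)) * 2 by ring,
        hmul2, Matrix.smul_apply, hB, smul_eq_mul]
  have hdetT : T.det = (2 ^ n * A.det) * (2 ^ n * B.det) := by
    rw [← Matrix.det_submatrix_equiv_self e, hTsub, Matrix.det_fromBlocks_zero₂₁,
      Matrix.det_smul, Matrix.det_smul, hcardι]
  -- `B = A * leftMulMatrix bL ηL`
  have hBmul : B = A * Algebra.leftMulMatrix bL ηL := by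
    ext i k
    rw [Matrix.mul_apply, hB]
    have hrep : ηL * bL k = ∑ l, Algebra.leftMulMatrix bL ηL l k • bL l := by
      conv_lhs => rw [← bL.sum_repr (ηL * bL k)]
      simp_rw [Algebra.leftMulMatrix_eq_repr_mul]
    dsimp only
    rw [show ηL * (bL i * bL k) = bL i * (ηL * bL k) by ring, hrep, Finset.mul_sum,
      map_sum]
    refine Finset.sum_congr rfl fun l _ => ?_
    rw [mul_smul_comm, map_smul, smul_eq_mul, hA, Algebra.traceMatrix_apply,
      Algebra.traceForm_apply, mul_comm]
  have hnormdet : |(Algebra.leftMulMatrix bL ηL).det| = 1 := by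
    rw [← Algebra.norm_eq_matrix_det bL ηL]
    have hu := NumberField.isUnit_iff_norm.mp η.isUnit
    rwa [RingOfIntegers.coe_norm] at hu
  have hAdet : A.det = (NumberField.discr L : ℚ) := by
    rw [hA, ← Algebra.discr_def, hbL, ← NumberField.coe_discr]
  have hdiscrc : |Algebra.discr ℚ ⇑c| = 4 ^ n * |(NumberField.discr L : ℚ)| ^ 2 := by
    rw [Algebra.discr_def, ← hT, hdetT, hBmul, Matrix.det_mul, hAdet]
    rw [abs_mul, abs_mul, abs_mul, abs_mul, hnormdet, mul_one, abs_pow, abs_two]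
    rw [show (4 : ℚ) = 2 * 2 by norm_num, mul_pow]
    ring
  -- compare with the discriminant of `M`
  set κ := Module.Free.ChooseBasisIndex ℤ (𝓞 M) with hκ
  set bM : Basis κ ℚ M := integralBasis M with hbM
  set e' : κ ≃ ι × Fin 2 := bM.indexEquiv c with he'
  set c' : Basis κ ℚ M := c.reindex e'.symm with hc'
  have hc'app : ∀ k, c' k = c (e' k) := by
    intro k
    rw [hc', Basis.reindex_apply, Equiv.symm_symm]
  have hdisc_eq : Algebra.discr ℚ ⇑c' = Algebra.discr ℚ ⇑c := by
    have hfun : ⇑c' = ⇑c ∘ ⇑(e'.symm).symm := by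
      funext k
      rw [hc'app]
      simp
    rw [hfun, Algebra.discr_reindex]
  have hαint : IsIntegral ℤ α := by
    refine IsIntegral.of_pow (two_pos) ?_
    rw [hα]
    exact ((η : 𝓞 L).isIntegral_coe).map (IsScalarTower.toAlgHom ℤ L M)
  have hcint : ∀ p : ι × Fin 2, IsIntegral ℤ (c p) := by
    rintro ⟨i, j⟩
    rw [hc, show (bL.smulTower bα) (i, j) = bL i • bα j from Basis.smulTower_apply _ _ _,
      Algebra.smul_def]
    have h1 : IsIntegral ℤ (bL i) := by
      rw [hbL, integralBasis_apply]
      exact (RingOfIntegers.basis L i).isIntegral_coe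
    exact (h1.map (IsScalarTower.toAlgHom ℤ L M)).mul (by rw [hbαa]; exact hαint.pow _)
  have hyint : ∀ k, IsIntegral ℤ (c' k) := fun k => by rw [hc'app]; exact hcint _
  set y : κ → 𝓞 M := fun k => ⟨c' k, hyint k⟩ with hy
  have hyc : ∀ k, algebraMap (𝓞 M) M (y k) = c' k := fun k => rfl
  set P : Matrix κ κ ℚ := bM.toMatrix ⇑c' with hP
  set P' : Matrix κ κ ℤ := fun i k => (RingOfIntegers.basis M).repr (y k) i with hP'
  have hPP' : P = (Int.castRingHom ℚ).mapMatrix P' := by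
    ext i k
    rw [hP, Basis.toMatrix_apply, ← hyc k, hbM, integralBasis_repr_apply]
    simp [hP']
    rfl
  have hvec : ⇑c' = Matrix.vecMul ⇑bM (P.map (algebraMap ℚ M)) := by
    funext k
    have hvk : Matrix.vecMul ⇑bM (P.map (algebraMap ℚ M)) k = ∑ i, P i k • bM i := by
      simp [Matrix.vecMul, dotProduct, Algebra.smul_def, mul_comm]
    rw [hvk, hP, Basis.sum_toMatrix_smul_self]
  have hdiscr_c' : Algebra.discr ℚ ⇑c' = P.det ^ 2 * Algebra.discr ℚ ⇑bM := by
    conv_lhs => rw [hvec]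
    rw [Algebra.discr_of_matrix_vecMul]
  have hPdet : P.det = (P'.det : ℚ) := by
    rw [hPP', ← RingHom.map_det]
    simp
  have hPdet0 : P'.det ≠ 0 := by
    intro h0
    have hnz : Algebra.discr ℚ ⇑c' ≠ 0 := Algebra.discr_not_zero_of_basis ℚ c'
    rw [hdiscr_c', hPdet, h0] at hnz
    simp at hnz
  have h1le : (1 : ℚ) ≤ P.det ^ 2 := by
    rw [hPdet]
    have h1 : (1 : ℤ) ≤ |P'.det| := Int.one_le_abs hPdet0
    have h2' : (1 : ℤ) ≤ P'.det ^ 2 := by nlinarith [sq_abs P'.det, abs_nonneg P'.det]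
    exact_mod_cast h2'
  have hdMle : |(NumberField.discr M : ℚ)| ≤ |Algebra.discr ℚ ⇑c'| := by
    rw [hdiscr_c', hbM, ← NumberField.coe_discr, abs_mul]
    nth_rewrite 1 [← one_mul |(NumberField.discr M : ℚ)|]
    exact mul_le_mul_of_nonneg_right (by rwa [abs_of_nonneg (by positivity)])
      (abs_nonneg _)
  calc |(NumberField.discr M : ℚ)| ≤ |Algebra.discr ℚ ⇑c'| := hdMle
    _ = |Algebra.discr ℚ ⇑c| := by rw [hdisc_eq]
    _ = 4 ^ n * |(NumberField.discr L : ℚ)| ^ 2 := hdiscrc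

end Aux

/-- Let `M = L(√η)` with `η` a unit of the ring of integers of the number field `L`. Then
`|d_M|^(1/[M:ℚ]) ≤ 2 |d_L|^(1/[L:ℚ])`. -/
theorem stmt18 (L M : Type*) [Field L] [Field M] [NumberField L] [NumberField M]
    [Algebra L M] (η : (𝓞 L)ˣ) (α : M)
    (hα : α ^ 2 = algebraMap L M (algebraMap (𝓞 L) L (η : 𝓞 L)))
    (hadj : Algebra.adjoin L {α} = ⊤) :
    (|(NumberField.discr M : ℝ)|) ^ ((Module.finrank ℚ M : ℝ)⁻¹) ≤
      2 * (|(NumberField.discr L : ℝ)|) ^ ((Module.finrank ℚ L : ℝ)⁻¹) := by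
  classical
  have hαL : IsIntegral L α := IsIntegral.of_finite L α
  set pb : PowerBasis L M := (Algebra.adjoin.powerBasis hαL).map
    ((Subalgebra.equivOfEq _ _ hadj).trans Subalgebra.topEquiv) with hpb
  have hgen : pb.gen = α := rfl
  have hdim : pb.dim = (minpoly L α).natDegree := rfl
  have hroot : (Polynomial.aeval α) (X ^ 2 - C (algebraMap (𝓞 L) L (η : 𝓞 L))) = 0 := by
    simp [hα]
  have hdle : (minpoly L α).natDegree ≤ 2 := by
    have h := Polynomial.natDegree_le_of_dvd (minpoly.dvd L α hroot)
      (monic_X_pow_sub_C _ (two_ne_zero)).ne_zero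
    rwa [natDegree_X_pow_sub_C] at h
  have hdpos : 0 < (minpoly L α).natDegree := minpoly.natDegree_pos hαL
  set n : ℕ := finrank ℚ L with hn
  have hnpos : 0 < n := Module.finrank_pos
  have hdL1 : (1 : ℝ) ≤ |(NumberField.discr L : ℝ)| := by
    have h0 : (NumberField.discr L) ≠ 0 := NumberField.discr_ne_zero L
    have : (1 : ℤ) ≤ |NumberField.discr L| := Int.one_le_abs h0
    exact_mod_cast this
  rcases (by omega : (minpoly L α).natDegree = 1 ∨ (minpoly L α).natDegree = 2) with h1 | h2
  · -- degree 1 : `M ≃ L`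
    have hfin1 : finrank L M = 1 := by rw [pb.finrank, hdim, h1]
    have hinj : Function.Injective (Algebra.ofId L M).toLinearMap := by
      exact (algebraMap L M).injective
    have hsurj : Function.Surjective (Algebra.ofId L M).toLinearMap :=
      (LinearMap.injective_iff_surjective_of_finrank_eq_finrank
        (by rw [finrank_self, hfin1])).mp hinj
    let f : L ≃ₐ[L] M := AlgEquiv.ofBijective (Algebra.ofId L M) ⟨hinj, hsurj⟩
    let g : L ≃ₐ[ℚ] M := f.restrictScalars ℚ
    have hdisc : NumberField.discr L = NumberField.discr M :=
      NumberField.discr_eq_discr_of_algEquiv L g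
    have hfr : finrank ℚ M = finrank ℚ L := g.toLinearEquiv.finrank_eq.symm
    rw [hfr, ← hdisc]
    have hx : 0 ≤ (|(NumberField.discr L : ℝ)|) ^ ((n : ℝ)⁻¹) :=
      Real.rpow_nonneg (abs_nonneg _) _
    linarith
  · -- degree 2
    have hfin2 : finrank L M = 2 := by rw [pb.finrank, hdim, h2]
    have hdim2 : pb.dim = 2 := by rw [hdim, h2]
    have hQ := stmt18_key η α hα pb hgen hdim2
    have hR : |(NumberField.discr M : ℝ)| ≤
        4 ^ n * |(NumberField.discr L : ℝ)| ^ 2 := by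
      have := hQ
      have hcast : ((|(NumberField.discr M : ℚ)| : ℚ) : ℝ) ≤
          ((4 ^ n * |(NumberField.discr L : ℚ)| ^ 2 : ℚ) : ℝ) := by exact_mod_cast this
      push_cast at hcast
      convert hcast using 2 <;> push_cast <;> try ring
    have hm : finrank ℚ M = n * 2 := by
      rw [← Module.finrank_mul_finrank ℚ L M, hfin2]
    rw [hm]
    set dL : ℝ := |(NumberField.discr L : ℝ)| with hdL
    set dM : ℝ := |(NumberField.discr M : ℝ)| with hdM
    have hm0 : ((n * 2 : ℕ) : ℝ) ≠ 0 := by positivity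
    have step1 : dM ^ (((n * 2 : ℕ) : ℝ))⁻¹ ≤
        (4 ^ n * dL ^ 2) ^ (((n * 2 : ℕ) : ℝ))⁻¹ :=
      Real.rpow_le_rpow (abs_nonneg _) hR (by positivity)
    have step2 : ((4 : ℝ) ^ n * dL ^ 2) ^ (((n * 2 : ℕ) : ℝ))⁻¹ =
        2 * dL ^ ((n : ℝ)⁻¹) := by
      rw [Real.mul_rpow (by positivity) (by positivity)]
      congr 1
      · rw [show (4 : ℝ) = 2 ^ 2 by norm_num, ← pow_mul,
          ← Real.rpow_natCast 2 (2 * n), ← Real.rpow_mul (by norm_num)]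
        rw [show ((2 * n : ℕ) : ℝ) * (((n * 2 : ℕ) : ℝ))⁻¹ = 1 by
          field_simp; push_cast; ring]
        exact Real.rpow_one 2
      · rw [← Real.rpow_natCast dL 2, ← Real.rpow_mul (abs_nonneg _)]
        congr 1
        push_cast
        field_simp
    calc dM ^ (((n * 2 : ℕ) : ℝ))⁻¹ ≤ (4 ^ n * dL ^ 2) ^ (((n * 2 : ℕ) : ℝ))⁻¹ := step1
      _ = 2 * dL ^ ((n : ℝ)⁻¹) := step2
end
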